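/- The optimal consumption cannot be identically zero: if (c,z) is an optimal pair (with a(T)>δ for some δ>0), then c is not the almost-everywhere zero function on [0,T]. -/

import Mathlib

open MeasureTheory Set Filter

noncomputable def stateX (x₀ : ℝ) (z : ℝ → ℝ) (t : ℝ) : ℝ :=
  x₀ + ∫ s in (0:ℝ)..t, z s

noncomputable def stateA (r p ξ a₀ x₀ : ℝ) (w : ℝ → ℝ) (c z : ℝ → ℝ) (t : ℝ) : ℝ :=
  Real.exp (r * t) *
    (a₀ + ∫ s in (0:ℝ)..t,
      (w (stateX x₀ z s) - p * c s - ξ * (z s) ^ 2) * Real.exp (-(r * s)))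

noncomputable def obj (ρ r η ξ p θ T a₀ x₀ : ℝ) (w : ℝ → ℝ) (c z : ℝ → ℝ) : ℝ :=
  (∫ t in (0:ℝ)..T, Real.exp (-(ρ * t)) * ((c t) ^ (1 - θ) / (1 - θ) - η * (z t) ^ 2)) +
    Real.exp (-(ρ * T)) * (stateA r p ξ a₀ x₀ w c z T) ^ (1 - θ) / (1 - θ)

noncomputable def wSup (w : ℝ → ℝ) : ℝ := ⨆ x : ℝ, |w x|

noncomputable def wDerivSup (w : ℝ → ℝ) : ℝ := ⨆ x : ℝ, |deriv w x|

def WageAssumptions (w : ℝ → ℝ) : Prop :=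
  ContDiff ℝ 2 w ∧ (∃ M : ℝ, ∀ x : ℝ, |w x| ≤ M) ∧
    (∀ x ∈ Set.Ioo (0:ℝ) 1, 0 < w x) ∧ (∀ x : ℝ, x ∉ Set.Icc (0:ℝ) 1 → w x < 0) ∧
    (∀ x : ℝ, x ≤ 0 → 0 < deriv w x) ∧ (∀ x : ℝ, 1 ≤ x → deriv w x < 0)

def CapC (ρ r p θ T a₀ C : ℝ) (w : ℝ → ℝ) : Prop :=
  C ^ θ > max 1 (Real.exp (|r - ρ| * T) ^ (1 / θ)) *
    ((a₀ + T * wSup w) / (p * (1 - Real.exp (-(r * T))) / r))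

def CapZ (r ξ T Z : ℝ) (w : ℝ → ℝ) : Prop :=
  Z > T * wDerivSup w * Real.exp (r * T) / (2 * ξ)

def ControlPair (T C Z : ℝ) (c z : ℝ → ℝ) : Prop :=
  Measurable c ∧ Measurable z ∧
    (∀ t ∈ Set.Icc (0:ℝ) T, c t ∈ Set.Icc (0:ℝ) C) ∧
    (∀ t ∈ Set.Icc (0:ℝ) T, |z t| ≤ Z)

def Admissible (r p ξ T a₀ x₀ C Z : ℝ) (w : ℝ → ℝ) (c z : ℝ → ℝ) : Prop :=
  ControlPair T C Z c z ∧ 0 ≤ stateA r p ξ a₀ x₀ w c z T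

def Optimal (ρ r η ξ p θ T a₀ x₀ C Z : ℝ) (w : ℝ → ℝ) (c z : ℝ → ℝ) : Prop :=
  Admissible r p ξ T a₀ x₀ C Z w c z ∧
    ∀ c' z' : ℝ → ℝ, Admissible r p ξ T a₀ x₀ C Z w c' z' →
      obj ρ r η ξ p θ T a₀ x₀ w c' z' ≤ obj ρ r η ξ p θ T a₀ x₀ w c z

/-- Helper: a measurable function bounded on `uIcc a b` is interval integrable. -/
lemma intervalIntegrable_of_bdd {f : ℝ → ℝ} {M a b : ℝ} (hf : Measurable f)
    (h : ∀ x ∈ Set.uIcc a b, |f x| ≤ M) : IntervalIntegrable f volume a b := by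
  rw [intervalIntegrable_iff]
  refine Measure.integrableOn_of_bounded (M := M) ?_ hf.aestronglyMeasurable ?_
  · exact (measure_Ioc_lt_top).ne
  · rw [ae_restrict_iff' measurableSet_uIoc]
    exact ae_of_all _ fun x hx => by
      rw [Real.norm_eq_abs]; exact h x (Set.uIoc_subset_uIcc hx)

theorem optimal_consumption_not_ae_zero
    (ρ r η ξ p θ T a₀ x₀ C Z δ : ℝ) (w : ℝ → ℝ)
    (hρ : 0 < ρ) (hr : 0 < r) (hη : 0 < η) (hξ : 0 < ξ) (hp : 0 < p) (hT : 0 < T)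
    (hθ : θ ∈ Set.Ioo (0:ℝ) 1) (hw : WageAssumptions w)
    (ha₀ : 0 ≤ a₀) (hx₀ : x₀ ∈ Set.Icc (0:ℝ) 1)
    (hC : CapC ρ r p θ T a₀ C w) (hZ : CapZ r ξ T Z w)
    (c z : ℝ → ℝ) (hopt : Optimal ρ r η ξ p θ T a₀ x₀ C Z w c z)
    (hδ : 0 < δ) (haT : δ < stateA r p ξ a₀ x₀ w c z T) :
    ¬ (∀ᵐ t ∂(volume.restrict (Set.Icc (0:ℝ) T)), c t = 0) := by
  intro hc
  obtain ⟨hθ0, hθ1⟩ := hθ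
  obtain ⟨⟨hcm, hzm, hccap, hzcap⟩, hA0⟩ := hopt.1
  have hc' : ∀ᵐ x ∂(volume : Measure ℝ), x ∈ Set.Icc (0:ℝ) T → c x = 0 :=
    (ae_restrict_iff' measurableSet_Icc).mp hc
  -- Z is positive
  have hds : 0 ≤ wDerivSup w := Real.iSup_nonneg fun x => abs_nonneg _
  have hZ0 : 0 < Z := by
    refine lt_of_le_of_lt ?_ hZ
    exact div_nonneg (mul_nonneg (mul_nonneg hT.le hds) (Real.exp_pos _).le) (by linarith)
  -- C is positive
  have h0mem : (0:ℝ) ∈ Set.Icc (0:ℝ) T := ⟨le_refl 0, hT.le⟩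
  have hCge : 0 ≤ C := le_trans (hccap 0 h0mem).1 (hccap 0 h0mem).2
  have hC0 : 0 < C := by
    rcases hCge.lt_or_eq with h | h
    · exact h
    exfalso
    rw [← h] at hC
    unfold CapC at hC
    have h1 : (0:ℝ) ^ θ = 0 := Real.zero_rpow (ne_of_gt hθ0)
    have hwS : 0 ≤ wSup w := Real.iSup_nonneg fun x => abs_nonneg _
    have hexp : Real.exp (-(r * T)) < 1 := Real.exp_lt_one_iff.mpr (by nlinarith)
    have hden : 0 < p * (1 - Real.exp (-(r * T))) / r :=
      div_pos (mul_pos hp (by linarith)) hr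
    have hnum : 0 ≤ a₀ + T * wSup w := add_nonneg ha₀ (mul_nonneg hT.le hwS)
    have hmax : (0:ℝ) ≤ max 1 (Real.exp (|r - ρ| * T) ^ (1 / θ)) :=
      le_trans zero_le_one (le_max_left _ _)
    have : (0:ℝ) ≤ max 1 (Real.exp (|r - ρ| * T) ^ (1 / θ)) *
        ((a₀ + T * wSup w) / (p * (1 - Real.exp (-(r * T))) / r)) :=
      mul_nonneg hmax (div_nonneg hnum hden.le)
    rw [h1] at hC
    linarith
  -- the truncated relocation control
  set z' : ℝ → ℝ := (Set.Icc (0:ℝ) T).indicator z with hz'def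
  have hz'm : Measurable z' := hzm.indicator measurableSet_Icc
  have hz'eq : ∀ t ∈ Set.Icc (0:ℝ) T, z' t = z t := fun t ht => Set.indicator_of_mem ht z
  have hz'bd : ∀ t, |z' t| ≤ Z := by
    intro t
    by_cases h : t ∈ Set.Icc (0:ℝ) T
    · rw [hz'eq t h]; exact hzcap t h
    · rw [hz'def, Set.indicator_of_notMem h]; simpa using hZ0.le
  have hz2 : ∀ t, (z' t) ^ 2 ≤ Z ^ 2 := fun t => by
    rw [← sq_abs]; exact pow_le_pow_left₀ (abs_nonneg _) (hz'bd t) 2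
  have hz'int : ∀ a b : ℝ, IntervalIntegrable z' volume a b := fun a b =>
    intervalIntegrable_of_bdd hz'm (fun x _ => hz'bd x)
  -- state X for z' is continuous; X agrees for z and z' on [0,T]
  have hX'c : Continuous (stateX x₀ z') := by
    have : Continuous fun t => ∫ s in (0:ℝ)..t, z' s :=
      intervalIntegral.continuous_primitive hz'int 0
    exact continuous_const.add this
  have hXeq : ∀ s ∈ Set.Icc (0:ℝ) T, stateX x₀ z s = stateX x₀ z' s := by
    intro s hs
    unfold stateX
    congr 1
    refine intervalIntegral.integral_congr fun t ht => ?_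
    rw [Set.uIcc_of_le hs.1] at ht
    exact (hz'eq t ⟨ht.1, ht.2.trans hs.2⟩).symm
  obtain ⟨hwreg, ⟨M, hM⟩, -⟩ := hw
  have hwc : Continuous w := hwreg.continuous
  -- the zero-consumption integrand
  set g : ℝ → ℝ :=
    fun s => (w (stateX x₀ z' s) - ξ * (z' s) ^ 2) * Real.exp (-(r * s)) with hgdef
  have hgm : Measurable g := by
    apply Measurable.mul
    · exact (hwc.measurable.comp hX'c.measurable).sub ((hz'm.pow_const 2).const_mul ξ)
    · exact (Real.measurable_exp.comp ((measurable_const.mul measurable_id).neg))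
  have hgbd : ∀ x ∈ Set.uIcc (0:ℝ) T, |g x| ≤ M + ξ * Z ^ 2 := by
    intro x hx
    rw [Set.uIcc_of_le hT.le] at hx
    have hex : Real.exp (-(r * x)) ≤ 1 := Real.exp_le_one_iff.mpr (by nlinarith [hx.1])
    have h1 : |w (stateX x₀ z' x) - ξ * (z' x) ^ 2| ≤ M + ξ * Z ^ 2 := by
      have := hM (stateX x₀ z' x)
      have hsq := hz2 x
      have h2 : (0:ℝ) ≤ (z' x) ^ 2 := sq_nonneg _
      rw [abs_le] at *
      constructor <;> nlinarith
    calc |g x| = |w (stateX x₀ z' x) - ξ * (z' x) ^ 2| * Real.exp (-(r * x)) := by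
          rw [hgdef]; rw [abs_mul, abs_of_pos (Real.exp_pos _)]
      _ ≤ (M + ξ * Z ^ 2) * 1 :=
          mul_le_mul h1 hex (Real.exp_pos _).le (le_trans (abs_nonneg _) h1)
      _ = M + ξ * Z ^ 2 := mul_one _
  have hgint : IntervalIntegrable g volume 0 T := intervalIntegrable_of_bdd hgm hgbd
  -- basic positive integrals
  set Eρ : ℝ := ∫ t in (0:ℝ)..T, Real.exp (-(ρ * t)) with hEρdef
  have hEρ : 0 < Eρ :=
    intervalIntegral.intervalIntegral_pos_of_pos
      ((by fun_prop : Continuous fun t : ℝ => Real.exp (-(ρ * t))).intervalIntegrable 0 T)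
      (fun x => Real.exp_pos _) hT
  set E : ℝ := ∫ s in (0:ℝ)..T, Real.exp (-(r * s)) with hEdef
  have hE : 0 < E :=
    intervalIntegral.intervalIntegral_pos_of_pos
      ((by fun_prop : Continuous fun s : ℝ => Real.exp (-(r * s))).intervalIntegrable 0 T)
      (fun x => Real.exp_pos _) hT
  set K : ℝ := p * Real.exp (r * T) * E with hKdef
  have hK : 0 < K := mul_pos (mul_pos hp (Real.exp_pos _)) hE
  set A : ℝ := stateA r p ξ a₀ x₀ w c z T with hAdef
  -- terminal wealth of the optimal pair in terms of g
  have hA_formula : A = Real.exp (r * T) * (a₀ + ∫ s in (0:ℝ)..T, g s) := by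
    rw [hAdef]
    unfold stateA
    congr 2
    refine intervalIntegral.integral_congr_ae ?_
    filter_upwards [hc'] with x hx hmem
    rw [Set.uIoc_of_le hT.le] at hmem
    have hmem' : x ∈ Set.Icc (0:ℝ) T := ⟨hmem.1.le, hmem.2⟩
    rw [hx hmem', hXeq x hmem', ← hz'eq x hmem', hgdef]
    ring
  -- the integral of the η z² term
  set Iz : ℝ := ∫ t in (0:ℝ)..T, Real.exp (-(ρ * t)) * (z' t) ^ 2 with hIzdef
  have hIzint : IntervalIntegrable (fun t => Real.exp (-(ρ * t)) * (z' t) ^ 2) volume 0 T := by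
    refine intervalIntegrable_of_bdd (M := Z ^ 2) ?_ ?_
    · exact (Real.measurable_exp.comp ((measurable_const.mul measurable_id).neg)).mul
        (hz'm.pow_const 2)
    · intro x hx
      rw [Set.uIcc_of_le hT.le] at hx
      have hex : Real.exp (-(ρ * x)) ≤ 1 := Real.exp_le_one_iff.mpr (by nlinarith [hx.1])
      rw [abs_mul, abs_of_pos (Real.exp_pos _), abs_of_nonneg (sq_nonneg _)]
      calc Real.exp (-(ρ * x)) * (z' x) ^ 2 ≤ 1 * Z ^ 2 :=
            mul_le_mul hex (hz2 x) (sq_nonneg _) zero_le_one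
        _ = Z ^ 2 := one_mul _
  -- objective value of the optimal pair
  have hobj_c : obj ρ r η ξ p θ T a₀ x₀ w c z
      = -(η * Iz) + Real.exp (-(ρ * T)) * A ^ (1 - θ) / (1 - θ) := by
    unfold obj
    rw [← hAdef]
    congr 1
    have : (∫ t in (0:ℝ)..T,
        Real.exp (-(ρ * t)) * ((c t) ^ (1 - θ) / (1 - θ) - η * (z t) ^ 2))
        = ∫ t in (0:ℝ)..T, -(η * (Real.exp (-(ρ * t)) * (z' t) ^ 2)) := by
      refine intervalIntegral.integral_congr_ae ?_
      filter_upwards [hc'] with x hx hmem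
      rw [Set.uIoc_of_le hT.le] at hmem
      have hmem' : x ∈ Set.Icc (0:ℝ) T := ⟨hmem.1.le, hmem.2⟩
      rw [hx hmem', ← hz'eq x hmem', Real.zero_rpow (by linarith : 1 - θ ≠ 0)]
      ring
    rw [this, intervalIntegral.integral_neg, intervalIntegral.integral_const_mul, ← hIzdef]
  -- perturbed objective and terminal wealth, for any ε
  have hstate_ε : ∀ ε : ℝ, stateA r p ξ a₀ x₀ w (fun _ => ε) z' T
      = Real.exp (r * T) * (a₀ + ∫ s in (0:ℝ)..T, g s) - ε * K := by
    intro ε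
    unfold stateA
    have hsplit : (∫ s in (0:ℝ)..T,
        (w (stateX x₀ z' s) - p * ε - ξ * (z' s) ^ 2) * Real.exp (-(r * s)))
        = (∫ s in (0:ℝ)..T, g s) - p * ε * E := by
      have h1 : (fun s => (w (stateX x₀ z' s) - p * ε - ξ * (z' s) ^ 2) * Real.exp (-(r * s)))
          = fun s => g s - p * ε * Real.exp (-(r * s)) := by
        funext s; rw [hgdef]; ring
      rw [h1, intervalIntegral.integral_sub hgint
        ((by fun_prop : Continuous fun s : ℝ => p * ε * Real.exp (-(r * s))).intervalIntegrable
          0 T),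
        intervalIntegral.integral_const_mul, ← hEdef]
    rw [hsplit, hKdef]
    ring
  have hobj_ε : ∀ ε : ℝ, 0 < ε → obj ρ r η ξ p θ T a₀ x₀ w (fun _ => ε) z'
      = ε ^ (1 - θ) / (1 - θ) * Eρ - η * Iz
        + Real.exp (-(ρ * T)) * (A - ε * K) ^ (1 - θ) / (1 - θ) := by
    intro ε hε
    unfold obj
    rw [hstate_ε ε, ← hA_formula]
    congr 1
    have h1 : (fun t => Real.exp (-(ρ * t)) * (ε ^ (1 - θ) / (1 - θ) - η * (z' t) ^ 2))
        = fun t => Real.exp (-(ρ * t)) * (ε ^ (1 - θ) / (1 - θ))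
            - η * (Real.exp (-(ρ * t)) * (z' t) ^ 2) := by
      funext t; ring
    rw [h1, intervalIntegral.integral_sub
      ((by fun_prop : Continuous fun t : ℝ =>
          Real.exp (-(ρ * t)) * (ε ^ (1 - θ) / (1 - θ))).intervalIntegrable 0 T)
        (hIzint.const_mul η),
      intervalIntegral.integral_mul_const, intervalIntegral.integral_const_mul,
      ← hEρdef, ← hIzdef]
    ring
  -- choose ε
  set Q : ℝ := (1 - θ) * Real.exp (-(ρ * T)) * δ ^ (-θ) * K with hQdef
  have hQ : 0 < Q := by
    apply mul_pos (mul_pos (mul_pos (by linarith) (Real.exp_pos _)) _) hK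
    exact Real.rpow_pos_of_pos hδ _
  set ε : ℝ := min (min C ((A - δ) / K)) ((Eρ / (2 * Q)) ^ (θ⁻¹ : ℝ)) with hεdef
  have hAδ : δ < A := haT
  have hε0 : 0 < ε := by
    apply lt_min (lt_min hC0 (div_pos (by linarith) hK))
    exact Real.rpow_pos_of_pos (div_pos hEρ (by linarith)) _
  have hεC : ε ≤ C := le_trans (min_le_left _ _) (min_le_left _ _)
  have hεK : ε * K ≤ A - δ := by
    have h6 : ε ≤ (A - δ) / K :=
      le_trans (min_le_left (min C ((A - δ) / K)) ((Eρ / (2 * Q)) ^ (θ⁻¹ : ℝ)))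
        (min_le_right C ((A - δ) / K))
    exact (le_div_iff₀ hK).mp h6
  have hεQ : ε ^ θ ≤ Eρ / (2 * Q) := by
    have h1 : ε ≤ (Eρ / (2 * Q)) ^ (θ⁻¹ : ℝ) := min_le_right _ _
    have h2 := Real.rpow_le_rpow hε0.le h1 hθ0.le
    rwa [Real.rpow_inv_rpow (le_of_lt (div_pos hEρ (by linarith))) (ne_of_gt hθ0)] at h2
  -- key inequality: ε^{-θ} Eρ > Q
  have hkey : Q < ε ^ (-θ) * Eρ := by
    have hp1 : (0:ℝ) < ε ^ θ := Real.rpow_pos_of_pos hε0 _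
    have h2 : (Eρ / (2 * Q))⁻¹ ≤ (ε ^ θ)⁻¹ := by
      apply inv_anti₀ hp1 hεQ
    rw [Real.rpow_neg hε0.le]
    have h3 : (Eρ / (2 * Q))⁻¹ = 2 * Q / Eρ := by
      rw [inv_div]
    rw [h3] at h2
    have h4 : 2 * Q = 2 * Q / Eρ * Eρ := (div_mul_cancel₀ _ (ne_of_gt hEρ)).symm
    have h5 : 2 * Q ≤ (ε ^ θ)⁻¹ * Eρ := by
      rw [h4]; exact mul_le_mul_of_nonneg_right h2 hEρ.le
    linarith
  -- admissibility of the perturbed pair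
  have hadm : Admissible r p ξ T a₀ x₀ C Z w (fun _ => ε) z' := by
    refine ⟨⟨measurable_const, hz'm, fun t _ => ⟨hε0.le, hεC⟩, fun t _ => hz'bd t⟩, ?_⟩
    rw [hstate_ε ε, ← hA_formula]
    linarith
  have hle := hopt.2 (fun _ => ε) z' hadm
  rw [hobj_ε ε hε0, hobj_c] at hle
  -- mean value theorem bound on A^{1-θ} - (A-εK)^{1-θ}
  have hεKpos : 0 < ε * K := mul_pos hε0 hK
  have hAK : δ ≤ A - ε * K := by linarith only [hεK]
  have hAKpos : (0:ℝ) < A - ε * K := lt_of_lt_of_le hδ hAK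
  have hlt : A - ε * K < A := by linarith only [hεKpos]
  obtain ⟨c₀, hc₀mem, hslope⟩ :=
    exists_hasDerivAt_eq_slope (fun x => x ^ (1 - θ) : ℝ → ℝ)
      (fun x => (1 - θ) * x ^ ((1 - θ) - 1)) hlt
      (fun x hx => (Real.continuousAt_rpow_const x (1 - θ)
        (Or.inr (by linarith))).continuousWithinAt)
      (fun x hx => Real.hasDerivAt_rpow_const
        (Or.inl (ne_of_gt (lt_of_lt_of_le hδ (le_trans hAK hx.1.le)))))
  have hc₀pos : 0 < c₀ := lt_of_lt_of_le hδ (le_trans hAK hc₀mem.1.le)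
  have hc₀δ : δ ≤ c₀ := le_trans hAK hc₀mem.1.le
  have hexp_eq : (1 - θ) - 1 = -θ := by ring
  rw [hexp_eq] at hslope
  have hden : A - (A - ε * K) = ε * K := by ring
  rw [hden] at hslope
  have hdiff : A ^ (1 - θ) - (A - ε * K) ^ (1 - θ) = (1 - θ) * c₀ ^ (-θ) * (ε * K) := by
    rw [hslope, div_mul_cancel₀ _ (ne_of_gt hεKpos)]
  have hc₀bd : c₀ ^ (-θ) ≤ δ ^ (-θ) :=
    (Real.rpow_le_rpow_iff_of_neg hc₀pos hδ (by linarith)).mpr hc₀δ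
  have h1θ : (0:ℝ) < 1 - θ := by linarith
  have hexpT : (0:ℝ) < Real.exp (-(ρ * T)) := Real.exp_pos _
  have hδθpos : 0 < δ ^ (-θ) := Real.rpow_pos_of_pos hδ _
  -- Δ := A^{1-θ} - (A-εK)^{1-θ} ≤ (1-θ) δ^{-θ} ε K
  have hΔ : A ^ (1 - θ) - (A - ε * K) ^ (1 - θ) ≤ (1 - θ) * δ ^ (-θ) * (ε * K) := by
    rw [hdiff]
    have h8 : (1 - θ) * c₀ ^ (-θ) ≤ (1 - θ) * δ ^ (-θ) :=
      mul_le_mul_of_nonneg_left hc₀bd h1θ.le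
    exact mul_le_mul_of_nonneg_right h8 hεKpos.le
  -- extract the linear consequence of optimality
  have h7 : ε ^ (1 - θ) / (1 - θ) * Eρ
      + Real.exp (-(ρ * T)) * (A - ε * K) ^ (1 - θ) / (1 - θ)
      ≤ Real.exp (-(ρ * T)) * A ^ (1 - θ) / (1 - θ) := by
    linarith only [hle]
  have h8 := mul_le_mul_of_nonneg_right h7 h1θ.le
  have h9 : ε ^ (1 - θ) * Eρ + Real.exp (-(ρ * T)) * (A - ε * K) ^ (1 - θ)
      ≤ Real.exp (-(ρ * T)) * A ^ (1 - θ) := by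
    have e1 : (ε ^ (1 - θ) / (1 - θ) * Eρ
        + Real.exp (-(ρ * T)) * (A - ε * K) ^ (1 - θ) / (1 - θ)) * (1 - θ)
        = ε ^ (1 - θ) * Eρ + Real.exp (-(ρ * T)) * (A - ε * K) ^ (1 - θ) := by
      field_simp
    have e2 : Real.exp (-(ρ * T)) * A ^ (1 - θ) / (1 - θ) * (1 - θ)
        = Real.exp (-(ρ * T)) * A ^ (1 - θ) := by
      field_simp
    rw [e1, e2] at h8
    exact h8
  have hle3 : ε ^ (1 - θ) * Eρ ≤ Q * ε := by
    have h10 : Real.exp (-(ρ * T)) * (A ^ (1 - θ) - (A - ε * K) ^ (1 - θ))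
        ≤ Real.exp (-(ρ * T)) * ((1 - θ) * δ ^ (-θ) * (ε * K)) :=
      mul_le_mul_of_nonneg_left hΔ hexpT.le
    have h11 : Real.exp (-(ρ * T)) * ((1 - θ) * δ ^ (-θ) * (ε * K)) = Q * ε := by
      rw [hQdef]; ring
    have h12 : Real.exp (-(ρ * T)) * (A ^ (1 - θ) - (A - ε * K) ^ (1 - θ))
        = Real.exp (-(ρ * T)) * A ^ (1 - θ)
          - Real.exp (-(ρ * T)) * (A - ε * K) ^ (1 - θ) := by ring
    rw [h12, h11] at h10
    linarith only [h9, h10]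
  -- but hkey says the opposite
  have hsplit : ε ^ (1 - θ) = ε ^ (-θ) * ε := by
    rw [show (1 - θ) = -θ + 1 by ring, Real.rpow_add hε0, Real.rpow_one]
  have hfinal : Q * ε < ε ^ (1 - θ) * Eρ := by
    rw [hsplit]
    have h13 := mul_lt_mul_of_pos_right hkey hε0
    calc Q * ε < ε ^ (-θ) * Eρ * ε := h13
      _ = ε ^ (-θ) * ε * Eρ := by ring
  linarith only [hle3, hfinal]
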